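/- For all n ≥ 1, if F is a triangle-free (2-simplex-free) family of subsets of an n-element set X, then |F| ≤ 2^{n-1} + n. Moreover, equality holds if and only if F = {A ⊆ X : x ∈ A} ∪ {A ⊆ X : |A| ≤ 1, x ∉ A} for some x ∈ X. -/

import Mathlib

open Finset

/-- A `d`-simplex: `d+1` sets whose total intersection is empty but such that
the intersection of any `d` of them is nonempty. -/
def IsSimplex {α : Type*} [DecidableEq α] (d : ℕ) (A : Fin (d + 1) → Finset α) : Prop :=
  (⋂ i, (A i : Set α)) = ∅ ∧
    ∀ j : Fin (d + 1), (⋂ i, ⋂ (_ : i ≠ j), (A i : Set α)).Nonempty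

/-- A family is `d`-simplex-free if it contains no `d`-simplex. -/
def SimplexFree {α : Type*} [DecidableEq α] (d : ℕ) (F : Finset (Finset α)) : Prop :=
  ¬ ∃ A : Fin (d + 1) → Finset α, (∀ i, A i ∈ F) ∧ IsSimplex d A

section Helpers
variable {α : Type*} [DecidableEq α]

lemma tri {F : Finset (Finset α)} (h : SimplexFree 2 F) {P Q S : Finset α}
    (hP : P ∈ F) (hQ : Q ∈ F) (hS : S ∈ F)
    (h1 : (P ∩ Q).Nonempty) (h2 : (P ∩ S).Nonempty) (h3 : (Q ∩ S).Nonempty) :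
    (P ∩ Q ∩ S).Nonempty := by
  by_contra hc
  rw [not_nonempty_iff_eq_empty] at hc
  apply h
  refine ⟨![P, Q, S], fun i => by fin_cases i <;> assumption, ?_, ?_⟩
  · ext a
    simp only [Set.mem_iInter, Set.mem_empty_iff_false, iff_false, not_forall]
    by_contra hall
    push_neg at hall
    have ha : a ∈ P ∩ Q ∩ S := by
      simp only [mem_inter]
      refine ⟨⟨?_, ?_⟩, ?_⟩
      · have := hall 0; simpa using this
      · have := hall 1; simpa using this
      · have := hall 2; simpa using this
    rw [hc] at ha; exact absurd ha (notMem_empty a)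
  · intro j
    fin_cases j
    · obtain ⟨a, ha⟩ := h3
      simp only [mem_inter] at ha
      exact ⟨a, by simp only [Set.mem_iInter]; intro i hi; fin_cases i <;> simp_all⟩
    · obtain ⟨a, ha⟩ := h2
      simp only [mem_inter] at ha
      exact ⟨a, by simp only [Set.mem_iInter]; intro i hi; fin_cases i <;> simp_all⟩
    · obtain ⟨a, ha⟩ := h1
      simp only [mem_inter] at ha
      exact ⟨a, by simp only [Set.mem_iInter]; intro i hi; fin_cases i <;> simp_all⟩

lemma simplex_two_le_card {A : Fin 3 → Finset α} (h : IsSimplex 2 A) (i : Fin 3) :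
    2 ≤ (A i).card := by
  obtain ⟨hempty, hne⟩ := h
  by_contra hc
  push_neg at hc
  interval_cases hcard : (A i).card
  · -- card 0 : A i = ∅
    have hAi : A i = ∅ := card_eq_zero.mp hcard
    obtain ⟨j, hij⟩ : ∃ j : Fin 3, i ≠ j := by
      fin_cases i
      exacts [⟨1, by decide⟩, ⟨0, by decide⟩, ⟨0, by decide⟩]
    obtain ⟨a, ha⟩ := hne j
    simp only [Set.mem_iInter] at ha
    have : a ∈ A i := ha i hij
    rw [hAi] at this; exact absurd this (notMem_empty a)
  · -- card 1 : A i = {b}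
    obtain ⟨b, hb⟩ := card_eq_one.mp hcard
    obtain ⟨j1, j2, hj12, hij1, hij2⟩ : ∃ j1 j2 : Fin 3, j1 ≠ j2 ∧ i ≠ j1 ∧ i ≠ j2 := by
      fin_cases i
      exacts [⟨1, 2, by decide, by decide, by decide⟩, ⟨0, 2, by decide, by decide, by decide⟩,
        ⟨0, 1, by decide, by decide, by decide⟩]
    obtain ⟨a1, ha1⟩ := hne j1
    obtain ⟨a2, ha2⟩ := hne j2
    simp only [Set.mem_iInter] at ha1 ha2
    have e1 : a1 = b := by have := ha1 i hij1; rw [hb] at this; simpa using this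
    have e2 : a2 = b := by have := ha2 i hij2; rw [hb] at this; simpa using this
    have hball : ∀ k : Fin 3, b ∈ (A k : Set α) := by
      intro k
      by_cases hk1 : k = j1
      · subst hk1; rw [← e2]; exact ha2 _ hj12
      · rw [← e1]; exact ha1 _ hk1
    have : b ∈ (⋂ k, (A k : Set α)) := Set.mem_iInter.mpr fun k => hball k
    rw [hempty] at this; exact this
end Helpers

section Helpers2
variable {α : Type*} [DecidableEq α]

lemma simplexFree_subset {F F' : Finset (Finset α)} (h : SimplexFree 2 F) (hs : F' ⊆ F) :
    SimplexFree 2 F' := by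
  rintro ⟨A, hA, hS⟩; exact h ⟨A, fun i => hs (hA i), hS⟩

lemma simplexFree_union_small {F F' : Finset (Finset α)} (h : SimplexFree 2 F)
    (hsub : ∀ S ∈ F', S ∈ F ∨ S.card ≤ 1) : SimplexFree 2 F' := by
  rintro ⟨A, hA, hS⟩
  refine h ⟨A, fun i => ?_, hS⟩
  rcases hsub _ (hA i) with h1 | h1
  · exact h1
  · have := simplex_two_le_card hS i; omega

/-- the family {∅} ∪ { {y} : y ∈ Y } -/
def smalls (Y : Finset α) : Finset (Finset α) := insert ∅ (Y.image (fun y => {y}))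

lemma mem_smalls {Y : Finset α} {A : Finset α} : A ∈ smalls Y ↔ A ⊆ Y ∧ A.card ≤ 1 := by
  simp only [smalls, mem_insert, mem_image]
  constructor
  · rintro (rfl | ⟨y, hy, rfl⟩)
    · simp
    · simp [singleton_subset_iff, hy]
  · rintro ⟨hsub, hcard⟩
    interval_cases h : A.card
    · left; exact card_eq_zero.mp h
    · right; obtain ⟨y, rfl⟩ := card_eq_one.mp h
      exact ⟨y, by simpa using hsub, rfl⟩

lemma card_smalls (Y : Finset α) : (smalls Y).card = Y.card + 1 := by
  rw [smalls, card_insert_of_notMem, card_image_of_injective _ (fun a b h => by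
    simpa using h)]
  simp only [mem_image, not_exists]
  rintro y ⟨hy, h⟩
  exact (singleton_ne_empty y) h

lemma card_smalls_le (Y : Finset α) : ∀ S ∈ smalls Y, S.card ≤ 1 := fun S hS =>
  (mem_smalls.mp hS).2

/-- subsets of Y containing z -/
lemma filter_mem_eq_image {Y : Finset α} {z : α} (hz : z ∈ Y) :
    Y.powerset.filter (fun A => z ∈ A) = ((Y.erase z).powerset).image (insert z) := by
  ext A
  simp only [mem_filter, mem_powerset, mem_image]
  constructor
  · rintro ⟨hsub, hzA⟩
    exact ⟨A.erase z, erase_subset_erase z hsub, insert_erase hzA⟩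
  · rintro ⟨B, hB, rfl⟩
    exact ⟨insert_subset hz (hB.trans (erase_subset z Y)), mem_insert_self z B⟩

lemma card_filter_mem {Y : Finset α} {z : α} (hz : z ∈ Y) :
    (Y.powerset.filter (fun A => z ∈ A)).card = 2 ^ (Y.card - 1) := by
  rw [filter_mem_eq_image hz, card_image_of_injOn, card_powerset, card_erase_of_mem hz]
  intro B1 h1 B2 h2 he
  have hz1 : z ∉ B1 := fun h => (mem_erase.mp ((mem_powerset.mp h1) h)).1 rfl
  have hz2 : z ∉ B2 := fun h => (mem_erase.mp ((mem_powerset.mp h2) h)).1 rfl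
  rw [← erase_insert hz1, ← erase_insert hz2, he]

end Helpers2

section Defs
variable {α : Type*} [DecidableEq α]

def star2 (Y : Finset α) (z : α) : Finset (Finset α) :=
  Y.powerset.filter (fun A => z ∈ A ∧ 2 ≤ A.card)

def extremal (X : Finset α) (x : α) : Finset (Finset α) :=
  X.powerset.filter (fun A => x ∈ A) ∪ X.powerset.filter (fun A => A.card ≤ 1 ∧ x ∉ A)

def closedW (Y : Finset α) (G : Finset (Finset α)) (W : Finset α) : Prop :=
  ∀ A ∈ G, A ∩ W = ∅ ∨ A ∩ (Y \ W) = ∅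

instance (Y : Finset α) (G : Finset (Finset α)) (W : Finset α) : Decidable (closedW Y G W) := by
  unfold closedW; infer_instance

def closedSets (Y : Finset α) (G : Finset (Finset α)) : Finset (Finset α) :=
  Y.powerset.filter (closedW Y G)

lemma card_star2 {Y : Finset α} {z : α} (hz : z ∈ Y) :
    (star2 Y z).card + 1 = 2 ^ (Y.card - 1) := by
  have h1 : insert {z} (star2 Y z) = Y.powerset.filter (fun A => z ∈ A) := by
    ext A
    simp only [star2, mem_insert, mem_filter, mem_powerset]
    constructor
    · rintro (rfl | ⟨h1, h2, _⟩)
      · exact ⟨by simpa using hz, mem_singleton_self z⟩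
      · exact ⟨h1, h2⟩
    · rintro ⟨hsub, hzA⟩
      by_cases hc : 2 ≤ A.card
      · exact Or.inr ⟨hsub, hzA, hc⟩
      · left
        have h1 : 1 ≤ A.card := card_pos.mpr ⟨z, hzA⟩
        have : A.card = 1 := by omega
        obtain ⟨y, rfl⟩ := card_eq_one.mp this
        simpa using (mem_singleton.mp hzA).symm
  have h2 : {z} ∉ star2 Y z := by simp [star2]
  rw [← card_filter_mem hz, ← h1, card_insert_of_notMem h2]

lemma mem_star2 {Y A : Finset α} {z : α} : A ∈ star2 Y z ↔ A ⊆ Y ∧ z ∈ A ∧ 2 ≤ A.card := by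
  simp [star2]

/-- the main statement, parameterized by the ground-set size -/
def Rstmt (α : Type*) [DecidableEq α] (n : ℕ) : Prop :=
  ∀ (X : Finset α) (F : Finset (Finset α)), X.card = n → 1 ≤ n → F ⊆ X.powerset →
    SimplexFree 2 F →
    F.card ≤ 2 ^ (n - 1) + n ∧ (F.card = 2 ^ (n - 1) + n → ∃ x ∈ X, F = extremal X x)

/-- the auxiliary counting statement -/
def Cstmt (α : Type*) [DecidableEq α] (m : ℕ) : Prop :=
  ∀ (Y : Finset α) (G : Finset (Finset α)), Y.card = m → G ⊆ Y.powerset →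
    (∀ A ∈ G, 2 ≤ A.card) → SimplexFree 2 G →
    2 * G.card + (closedSets Y G).card ≤ 2 ^ m ∧
      (2 * G.card + (closedSets Y G).card = 2 ^ m →
        G = ∅ ∨ ∃ z ∈ Y, G = star2 Y z)

end Defs

section ClosedLemmas
variable {α : Type*} [DecidableEq α]

lemma mem_closedSets {Y W : Finset α} {G : Finset (Finset α)} :
    W ∈ closedSets Y G ↔ W ⊆ Y ∧ ∀ A ∈ G, A ∩ W = ∅ ∨ A ∩ (Y \ W) = ∅ := by
  simp [closedSets, closedW]

lemma closedSets_compl {Y W : Finset α} {G : Finset (Finset α)} (h : W ∈ closedSets Y G) :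
    Y \ W ∈ closedSets Y G := by
  rw [mem_closedSets] at h ⊢
  obtain ⟨hsub, hcl⟩ := h
  refine ⟨sdiff_subset, fun A hA => ?_⟩
  rw [sdiff_sdiff_right_self, inf_eq_inter, inter_comm Y W,
    ((inter_eq_left.mpr hsub) : W ∩ Y = W)]
  exact (hcl A hA).symm

lemma closedSets_empty_mem {Y : Finset α} {G : Finset (Finset α)} :
    (∅ : Finset α) ∈ closedSets Y G := by
  rw [mem_closedSets]
  exact ⟨empty_subset Y, fun A hA => Or.inl (inter_empty A)⟩

lemma closedSets_of_empty {Y : Finset α} : closedSets Y (∅ : Finset (Finset α)) = Y.powerset := by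
  ext W; simp [mem_closedSets, mem_powerset]

lemma closed_iff_subset_or {Y W A : Finset α} (hA : A ⊆ Y) (hW : W ⊆ Y) :
    (A ∩ W = ∅ ∨ A ∩ (Y \ W) = ∅) ↔ (A ⊆ W ∨ A ∩ W = ∅) := by
  constructor
  · rintro (h | h)
    · exact Or.inr h
    · left; intro a ha
      by_contra haw
      exact (eq_empty_iff_forall_notMem.mp h a) (mem_inter.mpr ⟨ha, mem_sdiff.mpr ⟨hA ha, haw⟩⟩)
  · rintro (h | h)
    · right
      rw [eq_empty_iff_forall_notMem]
      intro a ha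
      rw [mem_inter, mem_sdiff] at ha
      exact ha.2.2 (h ha.1)
    · exact Or.inl h

lemma closedSets_inter {Y W1 W2 : Finset α} {G : Finset (Finset α)}
    (h1 : W1 ∈ closedSets Y G) (h2 : W2 ∈ closedSets Y G) : W1 ∩ W2 ∈ closedSets Y G := by
  rw [mem_closedSets] at h1 h2 ⊢
  refine ⟨(inter_subset_left).trans h1.1, fun A hA => ?_⟩
  rcases h1.2 A hA with h | h
  · left; rw [eq_empty_iff_forall_notMem] at h ⊢
    intro a ha; exact h a (by rw [mem_inter] at ha ⊢; exact ⟨ha.1, (mem_inter.mp ha.2).1⟩)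
  · rcases h2.2 A hA with h' | h'
    · left; rw [eq_empty_iff_forall_notMem] at h' ⊢
      intro a ha; exact h' a (by rw [mem_inter] at ha ⊢; exact ⟨ha.1, (mem_inter.mp ha.2).2⟩)
    · right
      rw [eq_empty_iff_forall_notMem] at h h' ⊢
      intro a ha
      rw [mem_inter, mem_sdiff, mem_inter] at ha
      by_cases haw : a ∈ W1
      · by_cases haw2 : a ∈ W2
        · exact ha.2.2 ⟨haw, haw2⟩
        · exact h' a (by rw [mem_inter, mem_sdiff]; exact ⟨ha.1, ha.2.1, haw2⟩)
      · exact h a (by rw [mem_inter, mem_sdiff]; exact ⟨ha.1, ha.2.1, haw⟩)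

end ClosedLemmas

section NumKey

lemma numkey {u w : ℕ} (hu : 2 ≤ u) (hw : 1 ≤ w) : u + 2*w ≤ u*w + 2 := by
  obtain ⟨a, rfl⟩ := Nat.exists_eq_add_of_le hu
  obtain ⟨b, rfl⟩ := Nat.exists_eq_add_of_le hw
  ring_nf
  nlinarith [Nat.zero_le (a*b)]

lemma numkeyEq {u w : ℕ} (hu : 2 ≤ u) (hw : 1 ≤ w) (h : u + 2*w = u*w + 2) :
    u = 2 ∨ w = 1 := by
  obtain ⟨a, rfl⟩ := Nat.exists_eq_add_of_le hu
  obtain ⟨b, rfl⟩ := Nat.exists_eq_add_of_le hw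
  ring_nf at h
  have : a * b = 0 := by nlinarith
  rcases Nat.mul_eq_zero.mp this with h | h <;> omega

end NumKey

section CproofSec
variable {α : Type*} [DecidableEq α]

lemma Y_mem_closedSets (Y : Finset α) (G : Finset (Finset α)) : Y ∈ closedSets Y G := by
  rw [mem_closedSets]
  exact ⟨Subset.refl Y, fun A hA => Or.inr (by rw [sdiff_self]; exact inter_empty A)⟩

lemma Cproof (m : ℕ) (IHC : ∀ k, k < m → Cstmt α k) (IHR : ∀ k, k ≤ m → Rstmt α k) :
    Cstmt α m := by
  intro Y G hYcard hGpow hG2 hGfree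
  by_cases hGe : G = ∅
  · subst hGe
    rw [closedSets_of_empty, card_powerset, hYcard]
    exact ⟨by simp, fun _ => Or.inl rfl⟩
  obtain ⟨A₀, hA₀⟩ := nonempty_iff_ne_empty.mpr hGe
  -- the minimal closed set V containing A₀
  set R : Finset (Finset α) := (closedSets Y G).filter (fun W => A₀ ⊆ W) with hR
  have hYR : Y ∈ R := by
    rw [hR, mem_filter]
    exact ⟨Y_mem_closedSets Y G, mem_powerset.mp (hGpow hA₀)⟩
  obtain ⟨V, hVR, hVmin'⟩ := Finset.exists_minimal (s := R) ⟨Y, hYR⟩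
  have hVmin : ∀ W ∈ R, ¬ W < V := fun W hW hlt => hlt.2 (hVmin' hW hlt.1)
  have hVclosed : V ∈ closedSets Y G := (mem_filter.mp hVR).1
  have hA₀V : A₀ ⊆ V := (mem_filter.mp hVR).2
  have hVY : V ⊆ Y := (mem_closedSets.mp hVclosed).1
  have hVle : ∀ W ∈ R, V ⊆ W := by
    intro W hW
    have hmem : V ∩ W ∈ R := by
      rw [hR, mem_filter]
      exact ⟨closedSets_inter hVclosed (mem_filter.mp hW).1,
        subset_inter hA₀V (mem_filter.mp hW).2⟩
    have hle : V ∩ W ⊆ V := inter_subset_left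
    have : V ∩ W = V := by
      by_contra hne
      exact hVmin _ hmem (lt_of_le_of_ne hle hne)
    rw [← this]; exact inter_subset_right
  have hvge : 2 ≤ V.card := le_trans (hG2 A₀ hA₀) (card_le_card hA₀V)
  have hvlem : V.card ≤ m := hYcard ▸ card_le_card hVY
  -- split G
  set GV : Finset (Finset α) := G.filter (fun A => A ⊆ V) with hGV
  set Gr : Finset (Finset α) := G.filter (fun A => ¬ A ⊆ V) with hGr
  have hGalt : ∀ A ∈ G, A ⊆ V ∨ A ∩ V = ∅ := by
    intro A hA
    exact (closed_iff_subset_or (mem_powerset.mp (hGpow hA)) hVY).mp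
      ((mem_closedSets.mp hVclosed).2 A hA)
  have hGrV : ∀ A ∈ Gr, A ∩ V = ∅ := by
    intro A hA
    rw [hGr, mem_filter] at hA
    exact (hGalt A hA.1).resolve_left hA.2
  have hGcard : GV.card + Gr.card = G.card := card_filter_add_card_filter_not _
  -- bound on GV via IHR
  set F' : Finset (Finset α) := GV ∪ smalls V with hF'
  have hdisj : Disjoint GV (smalls V) := by
    rw [disjoint_left]
    intro A hAV hAs
    have h1 := hG2 A (mem_of_mem_filter A hAV)
    have h2 := (mem_smalls.mp hAs).2
    omega
  have hF'card : F'.card = GV.card + (V.card + 1) := by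
    rw [hF', card_union_of_disjoint hdisj, card_smalls]
  have hF'pow : F' ⊆ V.powerset := by
    intro A hA
    rw [hF', mem_union] at hA
    rcases hA with hA | hA
    · exact mem_powerset.mpr (mem_filter.mp hA).2
    · exact mem_powerset.mpr (mem_smalls.mp hA).1
  have hF'free : SimplexFree 2 F' := by
    apply simplexFree_union_small hGfree
    intro S hS
    rw [hF', mem_union] at hS
    rcases hS with hS | hS
    · exact Or.inl (mem_of_mem_filter S hS)
    · exact Or.inr (mem_smalls.mp hS).2
  have hRV := IHR V.card hvlem V F' rfl (by omega) hF'pow hF'free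
  have hGVbound : GV.card + 1 ≤ 2 ^ (V.card - 1) := by
    have := hRV.1; omega
  have hpowv : 2 ^ (V.card - 1) * 2 = 2 ^ V.card := by
    rw [← pow_succ]; congr 1; omega
  -- the recursive part
  set Y' : Finset α := Y \ V with hY'
  have hY'card : Y'.card = m - V.card := by rw [hY', card_sdiff_of_subset hVY, hYcard]
  have hGrpow : Gr ⊆ Y'.powerset := by
    intro A hA
    rw [mem_powerset, hY']
    intro a ha
    rw [mem_sdiff]
    refine ⟨mem_powerset.mp (hGpow (mem_of_mem_filter A hA)) ha, fun hav => ?_⟩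
    exact (eq_empty_iff_forall_notMem.mp (hGrV A hA) a) (mem_inter.mpr ⟨ha, hav⟩)
  have hrec := IHC (m - V.card) (by omega) Y' Gr hY'card hGrpow
    (fun A hA => hG2 A (mem_of_mem_filter A hA))
    (simplexFree_subset hGfree (filter_subset _ _))
  -- closedSets decomposition
  have hCSeq : closedSets Y G = closedSets Y' Gr ∪ (closedSets Y' Gr).image (· ∪ V) := by
    ext W
    rw [mem_union, mem_image]
    constructor
    · intro hW
      have hWY : W ⊆ Y := (mem_closedSets.mp hW).1
      rcases (closed_iff_subset_or (mem_powerset.mp (hGpow hA₀)) hWY).mp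
          ((mem_closedSets.mp hW).2 A₀ hA₀) with hc | hc
      · -- A₀ ⊆ W, so V ⊆ W, W = (W \ V) ∪ V
        have hVW : V ⊆ W := by
          apply hVle
          rw [hR, mem_filter]
          exact ⟨hW, hc⟩
        right
        refine ⟨W \ V, ?_, sdiff_union_of_subset hVW⟩
        rw [mem_closedSets]
        constructor
        · exact sdiff_subset_sdiff hWY (Subset.refl V)
        · intro A hA
          rcases (mem_closedSets.mp hW).2 A (mem_of_mem_filter A hA) with h | h
          · left
            rw [eq_empty_iff_forall_notMem] at h ⊢
            intro a ha
            rw [mem_inter, mem_sdiff] at ha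
            exact h a (mem_inter.mpr ⟨ha.1, ha.2.1⟩)
          · right
            rw [eq_empty_iff_forall_notMem] at h ⊢
            intro a ha
            rw [mem_inter, mem_sdiff, hY', mem_sdiff, mem_sdiff] at ha
            obtain ⟨haA, ⟨haY, haV⟩, hnw⟩ := ha
            have haW : a ∈ W := by
              by_contra hw
              exact h a (mem_inter.mpr ⟨haA, mem_sdiff.mpr ⟨haY, hw⟩⟩)
            exact hnw ⟨haW, haV⟩
      · -- A₀ ∩ W = ∅, so V ∩ W = ∅, W ∈ closedSets Y' Gr
        have hVW : V ⊆ Y \ W := by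
          apply hVle
          rw [hR, mem_filter]
          refine ⟨closedSets_compl hW, ?_⟩
          intro a ha
          rw [mem_sdiff]
          refine ⟨mem_powerset.mp (hGpow hA₀) ha, fun hw => ?_⟩
          exact (eq_empty_iff_forall_notMem.mp hc a) (mem_inter.mpr ⟨ha, hw⟩)
        left
        rw [mem_closedSets]
        constructor
        · intro a ha
          rw [hY', mem_sdiff]
          refine ⟨hWY ha, fun hv => ?_⟩
          exact (mem_sdiff.mp (hVW hv)).2 ha
        · intro A hA
          rcases (mem_closedSets.mp hW).2 A (mem_of_mem_filter A hA) with h | h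
          · exact Or.inl h
          · right
            rw [eq_empty_iff_forall_notMem] at h ⊢
            intro a ha
            rw [mem_inter, mem_sdiff, hY', mem_sdiff] at ha
            exact h a (mem_inter.mpr ⟨ha.1, mem_sdiff.mpr ⟨ha.2.1.1, ha.2.2⟩⟩)
    · rintro (hW | ⟨W', hW', rfl⟩)
      · -- W ⊆ Y', closed for Gr
        have hWY' : W ⊆ Y' := (mem_closedSets.mp hW).1
        rw [mem_closedSets]
        constructor
        · exact hWY'.trans (hY' ▸ sdiff_subset)
        · intro A hA
          rcases hGalt A hA with hc | hc
          · left
            rw [eq_empty_iff_forall_notMem]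
            intro a ha
            rw [mem_inter] at ha
            exact (mem_sdiff.mp (hY' ▸ hWY' ha.2)).2 (hc ha.1)
          · have hAGr : A ∈ Gr := by
              rw [hGr, mem_filter]
              refine ⟨hA, fun hsub => ?_⟩
              obtain ⟨a, ha⟩ := card_pos.mp (show 0 < A.card from by have := hG2 A hA; omega)
              exact (eq_empty_iff_forall_notMem.mp hc a) (mem_inter.mpr ⟨ha, hsub ha⟩)
            rcases (mem_closedSets.mp hW).2 A hAGr with h | h
            · exact Or.inl h
            · right
              rw [eq_empty_iff_forall_notMem] at h ⊢
              intro a ha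
              rw [mem_inter, mem_sdiff] at ha
              have haY' : a ∈ Y' := by
                rw [hY', mem_sdiff]
                refine ⟨ha.2.1, fun hv => ?_⟩
                exact (eq_empty_iff_forall_notMem.mp hc a) (mem_inter.mpr ⟨ha.1, hv⟩)
              exact h a (mem_inter.mpr ⟨ha.1, mem_sdiff.mpr ⟨haY', ha.2.2⟩⟩)
      · -- W' ∪ V
        have hW'Y' : W' ⊆ Y' := (mem_closedSets.mp hW').1
        rw [mem_closedSets]
        constructor
        · exact union_subset (hW'Y'.trans (hY' ▸ sdiff_subset)) hVY
        · intro A hA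
          rcases hGalt A hA with hc | hc
          · right
            rw [eq_empty_iff_forall_notMem]
            intro a ha
            rw [mem_inter, mem_sdiff, mem_union] at ha
            exact ha.2.2 (Or.inr (hc ha.1))
          · have hAGr : A ∈ Gr := by
              rw [hGr, mem_filter]
              refine ⟨hA, fun hsub => ?_⟩
              obtain ⟨a, ha⟩ := card_pos.mp (show 0 < A.card from by have := hG2 A hA; omega)
              exact (eq_empty_iff_forall_notMem.mp hc a) (mem_inter.mpr ⟨ha, hsub ha⟩)
            rcases (mem_closedSets.mp hW').2 A hAGr with h | h
            · left
              rw [eq_empty_iff_forall_notMem] at h ⊢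
              intro a ha
              rw [mem_inter, mem_union] at ha
              rcases ha.2 with h2 | h2
              · exact h a (mem_inter.mpr ⟨ha.1, h2⟩)
              · exact (eq_empty_iff_forall_notMem.mp hc a) (mem_inter.mpr ⟨ha.1, h2⟩)
            · right
              rw [eq_empty_iff_forall_notMem] at h ⊢
              intro a ha
              rw [mem_inter, mem_sdiff, mem_union] at ha
              push_neg at ha
              have haY' : a ∈ Y' := by
                rw [hY', mem_sdiff]
                exact ⟨ha.2.1, ha.2.2.2⟩
              exact h a (mem_inter.mpr ⟨ha.1, mem_sdiff.mpr ⟨haY', ha.2.2.1⟩⟩)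
  have hVert : V.Nonempty := card_pos.mp (by omega)
  have hCSdisj : Disjoint (closedSets Y' Gr) ((closedSets Y' Gr).image (· ∪ V)) := by
    rw [disjoint_left]
    rintro W hW hW2
    obtain ⟨W', _, rfl⟩ := mem_image.mp hW2
    obtain ⟨a, ha⟩ := hVert
    have h1 : a ∈ W' ∪ V := mem_union_right W' ha
    have h2 := (mem_closedSets.mp hW).1 h1
    rw [hY', mem_sdiff] at h2
    exact h2.2 ha
  have hCSinj : Set.InjOn (· ∪ V) (closedSets Y' Gr) := by
    intro W1 h1 W2 h2 he
    have d1 : ∀ a ∈ W1, a ∉ V := fun a ha hv =>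
      (mem_sdiff.mp (hY' ▸ (mem_closedSets.mp h1).1 ha)).2 hv
    have d2 : ∀ a ∈ W2, a ∉ V := fun a ha hv =>
      (mem_sdiff.mp (hY' ▸ (mem_closedSets.mp h2).1 ha)).2 hv
    have he' : W1 ∪ V = W2 ∪ V := he
    ext a
    constructor
    · intro ha
      have h2 : a ∈ W2 ∪ V := by rw [← he']; exact mem_union_left V ha
      rcases mem_union.mp h2 with h | h
      · exact h
      · exact absurd h (d1 a ha)
    · intro ha
      have h2 : a ∈ W1 ∪ V := by rw [he']; exact mem_union_left V ha
      rcases mem_union.mp h2 with h | h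
      · exact h
      · exact absurd h (d2 a ha)
  have hCScard : (closedSets Y G).card = 2 * (closedSets Y' Gr).card := by
    rw [hCSeq, card_union_of_disjoint hCSdisj, card_image_of_injOn hCSinj]
    omega
  have hCSrbound : (closedSets Y' Gr).card ≤ 2 ^ (m - V.card) := by
    calc (closedSets Y' Gr).card ≤ Y'.powerset.card := card_le_card (filter_subset _ _)
    _ = 2 ^ (m - V.card) := by rw [card_powerset, hY'card]
  have hpowm : 2 ^ V.card * 2 ^ (m - V.card) = 2 ^ m := by
    rw [← pow_add]; congr 1; omega
  have hu4 : 4 ≤ 2 ^ V.card := by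
    calc (4:ℕ) = 2^2 := by norm_num
    _ ≤ 2 ^ V.card := Nat.pow_le_pow_right (by norm_num) hvge
  have hw1 : 1 ≤ 2 ^ (m - V.card) := Nat.one_le_two_pow
  have hnum := numkey (u := 2 ^ V.card) (w := 2 ^ (m - V.card)) (by omega) hw1
  rw [hpowm] at hnum
  constructor
  · omega
  · intro heq
    -- extract tightness
    have e1 : 2 * GV.card + 2 = 2 ^ V.card := by omega
    have e2 : (closedSets Y' Gr).card = 2 ^ (m - V.card) := by omega
    have e3 : 2 * Gr.card + (closedSets Y' Gr).card = 2 ^ (m - V.card) := by omega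
    have e4 : 2 ^ V.card + 2 * 2 ^ (m - V.card) = 2 ^ m + 2 := by omega
    have hGrcard : Gr.card = 0 := by omega
    rw [← hpowm] at e4
    have hweq : 2 ^ (m - V.card) = 1 := by
      rcases numkeyEq (u := 2 ^ V.card) (w := 2 ^ (m - V.card)) (by omega) hw1 e4 with h | h
      · omega
      · exact h
    have hmv : m - V.card = 0 := by
      by_contra h
      have : (2:ℕ)^1 ≤ 2 ^ (m - V.card) := Nat.pow_le_pow_right (by norm_num) (by omega)
      omega
    have hVeq : V = Y := eq_of_subset_of_card_le hVY (by omega)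
    -- G = GV
    have hGGV : G = GV := by
      rw [hGV]
      rw [eq_comm, filter_eq_self]
      intro A hA
      rw [hVeq]
      exact mem_powerset.mp (hGpow hA)
    -- equality in R
    have hF'eq : F'.card = 2 ^ (V.card - 1) + V.card := by omega
    obtain ⟨z, hzV, hext⟩ := hRV.2 hF'eq
    right
    refine ⟨z, hVeq ▸ hzV, ?_⟩
    rw [hGGV]
    ext A
    rw [mem_star2]
    constructor
    · intro hA
      have hA2 : 2 ≤ A.card := hG2 A (mem_of_mem_filter A hA)
      have hAF' : A ∈ F' := by rw [hF']; exact mem_union_left _ hA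
      rw [hext, extremal, mem_union, mem_filter, mem_filter, mem_powerset] at hAF'
      rcases hAF' with ⟨h1, h2⟩ | ⟨_, h2, _⟩
      · exact ⟨hVeq ▸ h1, h2, hA2⟩
      · omega
    · rintro ⟨hAY, hzA, hA2⟩
      have hAF' : A ∈ F' := by
        rw [hext, extremal, mem_union, mem_filter, mem_powerset]
        exact Or.inl ⟨hVeq ▸ hAY, hzA⟩
      rw [hF', mem_union] at hAF'
      rcases hAF' with h | h
      · rw [hGV, mem_filter] at h
        rw [hGV, mem_filter]
        exact h
      · have := (mem_smalls.mp h).2; omega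

end CproofSec

section RproofSec
variable {α : Type*} [DecidableEq α]

lemma card_extremal {X : Finset α} {x : α} (hx : x ∈ X) :
    (extremal X x).card = 2 ^ (X.card - 1) + X.card := by
  have hdisj : Disjoint (X.powerset.filter (fun A => x ∈ A))
      (X.powerset.filter (fun A => A.card ≤ 1 ∧ x ∉ A)) := by
    rw [disjoint_left]
    intro A h1 h2
    exact (mem_filter.mp h2).2.2 (mem_filter.mp h1).2
  have h2 : X.powerset.filter (fun A => A.card ≤ 1 ∧ x ∉ A) = smalls (X.erase x) := by
    ext A
    rw [mem_filter, mem_powerset, mem_smalls]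
    constructor
    · rintro ⟨h1, h2, h3⟩; exact ⟨subset_erase.mpr ⟨h1, h3⟩, h2⟩
    · rintro ⟨h1, h2⟩
      have := subset_erase.mp h1
      exact ⟨this.1.trans (Subset.refl X), h2, this.2⟩
  rw [extremal, card_union_of_disjoint hdisj, card_filter_mem hx, h2, card_smalls,
    card_erase_of_mem hx]
  have : 1 ≤ X.card := card_pos.mpr ⟨x, hx⟩
  omega

lemma extremal_singleton (x : α) : extremal {x} x = {∅, {x}} := by
  ext A
  simp only [extremal, mem_union, mem_filter, mem_powerset, subset_singleton_iff,
    mem_insert, mem_singleton]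
  constructor
  · rintro (⟨h1 | h1, h2⟩ | ⟨h1 | h1, _, h3⟩)
    · subst h1; exact absurd h2 (notMem_empty x)
    · right; exact h1
    · left; exact h1
    · subst h1; exact absurd (mem_singleton_self x) h3
  · rintro (rfl | rfl)
    · exact Or.inr ⟨Or.inl rfl, by simp⟩
    · exact Or.inl ⟨Or.inr rfl, mem_singleton_self x⟩

lemma mem_extremal {X A : Finset α} {x : α} :
    A ∈ extremal X x ↔ (A ⊆ X ∧ x ∈ A) ∨ (A ⊆ X ∧ A.card ≤ 1 ∧ x ∉ A) := by
  simp [extremal, mem_union, mem_filter, mem_powerset]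

lemma Rproof (n : ℕ) (IHC : ∀ k, k < n → Cstmt α k) : Rstmt α n := by
  intro X F hXcard hn hFpow hFfree
  -- base case n = 1
  rcases eq_or_lt_of_le hn with hn1 | hn2
  · obtain ⟨x, rfl⟩ := card_eq_one.mp (hXcard.trans hn1.symm)
    have hFsub : F ⊆ {∅, {x}} := by
      intro A hA
      have := mem_powerset.mp (hFpow hA)
      rw [subset_singleton_iff] at this
      simp only [mem_insert, mem_singleton]
      exact this
    have hcard2 : ({∅, {x}} : Finset (Finset α)).card = 2 := by
      rw [card_insert_of_notMem (by intro h; exact (singleton_ne_empty x) (mem_singleton.mp h).symm), card_singleton]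
    have hble : F.card ≤ 2 := hcard2 ▸ card_le_card hFsub
    constructor
    · rw [← hn1]; simpa using hble
    · intro heq
      rw [← hn1] at heq
      norm_num at heq
      refine ⟨x, mem_singleton_self x, ?_⟩
      rw [extremal_singleton]
      exact eq_of_subset_of_card_le hFsub (by omega)
  -- main case n ≥ 2
  obtain ⟨x, hx⟩ := card_pos.mp (show 0 < X.card by omega)
  set Y : Finset α := X.erase x with hY
  have hYcard : Y.card = n - 1 := by rw [hY, card_erase_of_mem hx, hXcard]
  have hxY : x ∉ Y := notMem_erase x X
  have hYX : Y ⊆ X := erase_subset x X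
  set F1 : Finset (Finset α) := F.filter (fun A => x ∈ A) with hF1
  set F0 : Finset (Finset α) := F.filter (fun A => ¬ x ∈ A) with hF0
  have hsplitF : F1.card + F0.card = F.card := card_filter_add_card_filter_not _
  set Sm : Finset (Finset α) := F0.filter (fun A => A.card ≤ 1) with hSm
  set G : Finset (Finset α) := F0.filter (fun A => ¬ A.card ≤ 1) with hG
  have hsplitF0 : Sm.card + G.card = F0.card := card_filter_add_card_filter_not _
  have hG2 : ∀ A ∈ G, 2 ≤ A.card := by
    intro A hA; have := (mem_filter.mp hA).2; omega
  have hF0Y : ∀ A ∈ F0, A ⊆ Y := by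
    intro A hA
    rw [hF0, mem_filter] at hA
    exact subset_erase.mpr ⟨mem_powerset.mp (hFpow hA.1), hA.2⟩
  have hGF : G ⊆ F := (filter_subset _ _).trans (filter_subset _ _)
  have hGpow : G ⊆ Y.powerset := fun A hA =>
    mem_powerset.mpr (hF0Y A (mem_of_mem_filter A hA))
  have hGfree : SimplexFree 2 G := simplexFree_subset hFfree hGF
  have hSmsub : Sm ⊆ smalls Y := by
    intro A hA
    rw [mem_smalls]
    exact ⟨hF0Y A (mem_of_mem_filter A hA), (mem_filter.mp hA).2⟩
  have hSmcard : Sm.card ≤ (n - 1) + 1 := by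
    have := card_le_card hSmsub
    rw [card_smalls, hYcard] at this
    exact this
  set H : Finset (Finset α) := F1.image (fun A => A.erase x) with hH
  have hF1x : ∀ A ∈ F1, x ∈ A := fun A hA => (mem_filter.mp hA).2
  have hHcard : H.card = F1.card := by
    rw [hH]
    apply card_image_of_injOn
    intro A hA B hB he
    have he' : A.erase x = B.erase x := he
    rw [← insert_erase (hF1x A hA), ← insert_erase (hF1x B hB), he']
  have hHpow : H ⊆ Y.powerset := by
    intro B hB
    obtain ⟨A, hA, rfl⟩ := mem_image.mp hB
    exact mem_powerset.mpr (erase_subset_erase x (mem_powerset.mp (hFpow (mem_of_mem_filter A hA))))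
  -- the key property (iii')
  have hiii : ∀ A ∈ G, ∀ B ∈ H, ∀ C ∈ H,
      (A ∩ B).Nonempty → (A ∩ C).Nonempty → (A ∩ B ∩ C).Nonempty := by
    intro A hA B hB C hC h1 h2
    obtain ⟨B₀, hB₀, rfl⟩ := mem_image.mp hB
    obtain ⟨C₀, hC₀, rfl⟩ := mem_image.mp hC
    have h3 : (B₀ ∩ C₀).Nonempty := ⟨x, mem_inter.mpr ⟨hF1x _ hB₀, hF1x _ hC₀⟩⟩
    have h1' : (A ∩ B₀).Nonempty := h1.mono (inter_subset_inter (Subset.refl A) (erase_subset x B₀))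
    have h2' : (A ∩ C₀).Nonempty := h2.mono (inter_subset_inter (Subset.refl A) (erase_subset x C₀))
    obtain ⟨a, ha⟩ := tri hFfree (hGF hA) (mem_of_mem_filter B₀ hB₀) (mem_of_mem_filter C₀ hC₀) h1' h2' h3
    simp only [mem_inter] at ha
    have haY : a ∈ Y := hF0Y A (mem_of_mem_filter A hA) ha.1.1
    have hax : a ≠ x := fun h => hxY (h ▸ haY)
    exact ⟨a, by simp only [mem_inter, mem_erase]; exact ⟨⟨ha.1.1, hax, ha.1.2⟩, hax, ha.2⟩⟩
  -- counting
  set CS : Finset (Finset α) := closedSets Y G with hCS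
  set K : Finset (Finset α) := H \ CS with hK
  have hpair : ∀ W, W ⊆ Y → W ∉ CS → W ∈ H → Y \ W ∈ H → False := by
    intro W hWY hWCS hWH hWH2
    have hnc : ¬ (∀ A ∈ G, A ∩ W = ∅ ∨ A ∩ (Y \ W) = ∅) := by
      intro hall
      exact hWCS (mem_closedSets.mpr ⟨hWY, hall⟩)
    push_neg at hnc
    obtain ⟨A, hA, hA1, hA2⟩ := hnc
    obtain ⟨a, ha⟩ := hiii A hA W hWH (Y \ W) hWH2
      hA1 hA2
    rw [mem_inter, mem_inter, mem_sdiff] at ha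
    exact ha.2.2 ha.1.2
  set K' : Finset (Finset α) := K.image (fun W => Y \ W) with hK'
  have hKY : ∀ W ∈ K, W ⊆ Y := fun W hW =>
    mem_powerset.mp (hHpow (mem_sdiff.mp hW).1)
  have hK'card : K'.card = K.card := by
    rw [hK']
    apply card_image_of_injOn
    intro W1 h1 W2 h2 he
    have he' : Y \ W1 = Y \ W2 := he
    rw [← Finset.sdiff_sdiff_eq_self (hKY W1 h1), ← Finset.sdiff_sdiff_eq_self (hKY W2 h2), he']
  have hKsub : K ⊆ Y.powerset \ CS := by
    intro W hW
    rw [mem_sdiff]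
    exact ⟨mem_powerset.mpr (hKY W hW), (mem_sdiff.mp hW).2⟩
  have hK'sub : K' ⊆ Y.powerset \ CS := by
    intro W hW
    obtain ⟨U, hU, rfl⟩ := mem_image.mp hW
    rw [mem_sdiff, mem_powerset]
    refine ⟨sdiff_subset, fun hc => ?_⟩
    have := closedSets_compl (hCS ▸ hc)
    rw [Finset.sdiff_sdiff_eq_self (hKY U hU)] at this
    exact (mem_sdiff.mp hU).2 (hCS ▸ this)
  have hKK'disj : Disjoint K K' := by
    rw [disjoint_left]
    intro W hW hW'
    obtain ⟨U, hU, rfl⟩ := mem_image.mp hW'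
    exact hpair U (hKY U hU) (mem_sdiff.mp hU).2 (mem_sdiff.mp hU).1 (mem_sdiff.mp hW).1
  have hKbound : K.card + K.card ≤ (Y.powerset \ CS).card := by
    calc K.card + K.card = (K ∪ K').card := by
          rw [card_union_of_disjoint hKK'disj, hK'card]
    _ ≤ (Y.powerset \ CS).card := card_le_card (union_subset hKsub hK'sub)
  have hCSsub : CS ⊆ Y.powerset := filter_subset _ _
  have hCSsplit : CS.card + (Y.powerset \ CS).card = 2 ^ (n - 1) := by
    rw [card_sdiff_of_subset hCSsub, card_powerset, hYcard]
    have := card_le_card hCSsub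
    rw [card_powerset, hYcard] at this
    omega
  have hHsplit : (H ∩ CS).card + K.card = H.card := by
    rw [hK]; exact card_inter_add_card_sdiff H CS
  have hHCS : (H ∩ CS).card ≤ CS.card := card_le_card inter_subset_right
  have hCmain := IHC (n - 1) (by omega) Y G hYcard hGpow hG2 hGfree
  rw [← hCS] at hCmain
  have hCbound : 2 * G.card + CS.card ≤ 2 ^ (n - 1) := hCmain.1
  constructor
  · omega
  · intro heq
    -- tightness extraction
    have hCSH : CS ⊆ H := by
      have hinter : H ∩ CS = CS := eq_of_subset_of_card_le inter_subset_right (by omega)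
      intro W hW
      rw [← hinter] at hW
      exact (mem_inter.mp hW).1
    have hKeq : K ∪ K' = Y.powerset \ CS := by
      apply eq_of_subset_of_card_le (union_subset hKsub hK'sub)
      rw [card_union_of_disjoint hKK'disj, hK'card]
      omega
    have hboth : ∀ W, W ⊆ Y → W ∉ CS → W ∈ H ∨ Y \ W ∈ H := by
      intro W hWY hWCS
      have hmem : W ∈ K ∪ K' := by
        rw [hKeq, mem_sdiff]; exact ⟨mem_powerset.mpr hWY, hWCS⟩
      rcases mem_union.mp hmem with h | h
      · exact Or.inl (mem_sdiff.mp h).1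
      · obtain ⟨U, hU, he⟩ := mem_image.mp h
        have he2 : Y \ U = W := he
        have he3 : Y \ W = U := by rw [← he2, Finset.sdiff_sdiff_eq_self (hKY U hU)]
        right
        rw [he3]
        exact (mem_sdiff.mp hU).1
    have hSmeq : Sm = smalls Y := by
      apply eq_of_subset_of_card_le hSmsub
      rw [card_smalls, hYcard]
      omega
    have pairTool : ∀ W, W ⊆ Y → (∃ A ∈ G, (A ∩ W).Nonempty ∧ (A ∩ (Y \ W)).Nonempty) →
        W ∈ H ∨ Y \ W ∈ H := by
      rintro W hWY ⟨A, hA, h1, h2⟩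
      apply hboth W hWY
      intro hWCS
      rcases (mem_closedSets.mp (hCS ▸ hWCS)).2 A hA with h | h
      · exact (nonempty_iff_ne_empty.mp h1) h
      · exact (nonempty_iff_ne_empty.mp h2) h
    have hFmem : ∀ A : Finset α, A ∈ F ↔
        ((x ∈ A ∧ A ⊆ X ∧ A.erase x ∈ H) ∨ (x ∉ A ∧ (A ∈ G ∨ A ∈ Sm))) := by
      intro A
      constructor
      · intro hA
        by_cases hxA : x ∈ A
        · exact Or.inl ⟨hxA, mem_powerset.mp (hFpow hA),
            mem_image_of_mem _ (mem_filter.mpr ⟨hA, hxA⟩)⟩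
        · refine Or.inr ⟨hxA, ?_⟩
          by_cases hc : A.card ≤ 1
          · exact Or.inr (mem_filter.mpr ⟨mem_filter.mpr ⟨hA, hxA⟩, hc⟩)
          · exact Or.inl (mem_filter.mpr ⟨mem_filter.mpr ⟨hA, hxA⟩, hc⟩)
      · rintro (⟨hxA, hAX, hAH⟩ | ⟨hxA, (hA | hA)⟩)
        · obtain ⟨B, hB, he⟩ := mem_image.mp hAH
          have he' : B.erase x = A.erase x := he
          have hBA : B = A := by rw [← insert_erase (hF1x B hB), he', insert_erase hxA]
          exact hBA ▸ mem_of_mem_filter B hB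
        · exact mem_of_mem_filter A (mem_of_mem_filter A hA)
        · exact mem_of_mem_filter A (mem_of_mem_filter A hA)
    by_cases hGe : G = ∅
    · -- extremal at x
      refine ⟨x, hx, ?_⟩
      have hHall : ∀ W, W ⊆ Y → W ∈ H := by
        intro W hW
        apply hCSH
        rw [hCS, hGe, closedSets_of_empty]
        exact mem_powerset.mpr hW
      ext A
      rw [hFmem A, mem_extremal]
      constructor
      · rintro (⟨h1, h2, _⟩ | ⟨h1, (h2 | h2)⟩)
        · exact Or.inl ⟨h2, h1⟩
        · rw [hGe] at h2; exact absurd h2 (notMem_empty A)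
        · rw [hSmeq, mem_smalls] at h2
          exact Or.inr ⟨h2.1.trans hYX, h2.2, h1⟩
      · rintro (⟨h1, h2⟩ | ⟨h1, h2, h3⟩)
        · exact Or.inl ⟨h2, h1, hHall _ (erase_subset_erase x h1)⟩
        · refine Or.inr ⟨h3, Or.inr ?_⟩
          rw [hSmeq, mem_smalls]
          exact ⟨subset_erase.mpr ⟨h1, h3⟩, h2⟩
    · -- extremal at an anchor u in Y
      obtain ⟨z, hzY, hGz⟩ := (hCmain.2 (by omega)).resolve_left hGe
      obtain ⟨A₀, hA₀⟩ := nonempty_iff_ne_empty.mpr hGe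
      have hm2 : 2 ≤ Y.card :=
        le_trans (hG2 A₀ hA₀) (card_le_card (mem_powerset.mp (hGpow hA₀)))
      have memG : ∀ S : Finset α, S ⊆ Y → z ∈ S → 2 ≤ S.card → S ∈ G := by
        intro S h1 h2 h3; rw [hGz, mem_star2]; exact ⟨h1, h2, h3⟩
      have hanchor : ∃ u ∈ Y, G = star2 Y u ∧
          H = insert ∅ (Y.powerset.filter (fun W => u ∈ W)) := by
        by_cases hm3 : 3 ≤ Y.card
        · -- anchor is z
          have hHstar : ∀ B ∈ H, B.Nonempty → z ∈ B := by
            intro B hB hBne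
            by_contra hzB
            obtain ⟨b, hbB⟩ := hBne
            have hbY : b ∈ Y := mem_powerset.mp (hHpow hB) hbB
            have hbz : b ≠ z := fun h => hzB (h ▸ hbB)
            have hzbG : ({z, b} : Finset α) ∈ G := memG _
              (insert_subset hzY (singleton_subset_iff.mpr hbY)) (mem_insert_self z {b})
              (by simp [card_pair (Ne.symm hbz)])
            have step1 : ∀ D ∈ H, z ∈ D → b ∈ D := by
              intro D hD hzD
              by_contra hbD
              obtain ⟨a, ha⟩ := hiii _ hzbG B hB D hD
                ⟨b, by simp [hbB]⟩ ⟨z, by simp [hzD]⟩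
              rw [mem_inter, mem_inter, mem_insert, mem_singleton] at ha
              obtain ⟨⟨hz1, hz2⟩, hz3⟩ := ha
              rcases hz1 with rfl | rfl
              · exact hzB hz2
              · exact hbD hz3
            have step2 : ({b} : Finset α) ∈ H := by
              rcases pairTool {b} (singleton_subset_iff.mpr hbY)
                ⟨{z,b}, hzbG, ⟨b, by simp⟩,
                  ⟨z, by simp [mem_sdiff, hzY, Ne.symm hbz]⟩⟩ with h | h
              · exact h
              · exfalso
                have hzmem : z ∈ Y \ {b} := by simp [mem_sdiff, hzY, Ne.symm hbz]
                have hcon := step1 _ h hzmem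
                simp [mem_sdiff] at hcon
            have hwne : (Y \ {z, b}).Nonempty := by
              rw [nonempty_iff_ne_empty]
              intro hcon
              have hsub := sdiff_eq_empty_iff_subset.mp hcon
              have hle := card_le_card hsub
              rw [card_insert_of_notMem (notMem_singleton.mpr (Ne.symm hbz)), card_singleton] at hle
              omega
            obtain ⟨w, hwmem⟩ := hwne
            rw [mem_sdiff, mem_insert, mem_singleton] at hwmem
            obtain ⟨hwY, hwzb⟩ := hwmem
            have hwz : w ≠ z := fun h => hwzb (Or.inl h)
            have hwb : w ≠ b := fun h => hwzb (Or.inr h)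
            have step3 : ({b, w} : Finset α) ∈ H := by
              rcases pairTool {b, w}
                (insert_subset hbY (singleton_subset_iff.mpr hwY))
                ⟨{z,b}, hzbG, ⟨b, by simp⟩,
                  ⟨z, by simp [mem_sdiff, hzY, Ne.symm hbz, Ne.symm hwz]⟩⟩ with h | h
              · exact h
              · exfalso
                have hzmem : z ∈ Y \ {b, w} := by
                  simp [mem_sdiff, hzY, Ne.symm hbz, Ne.symm hwz]
                have hcon := step1 _ h hzmem
                simp [mem_sdiff] at hcon
            have hzwG : ({z, w} : Finset α) ∈ G := memG _
              (insert_subset hzY (singleton_subset_iff.mpr hwY)) (mem_insert_self _ _)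
              (by simp [card_pair (Ne.symm hwz)])
            rcases pairTool {z, b} (insert_subset hzY (singleton_subset_iff.mpr hbY))
              ⟨{z,w}, hzwG, ⟨z, by simp⟩,
                ⟨w, by simp [mem_sdiff, hwY, hwz, hwb]⟩⟩ with h | h
            · obtain ⟨a, ha⟩ := hiii _ hzwG _ step3 _ h ⟨w, by simp⟩ ⟨z, by simp⟩
              rw [mem_inter, mem_inter] at ha
              simp only [mem_insert, mem_singleton] at ha
              rcases ha.1.1 with rfl | rfl
              · rcases ha.1.2 with h' | h'
                · exact hbz h'.symm
                · exact hwz h'.symm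
              · rcases ha.2 with h' | h'
                · exact hwz h'
                · exact hwb h'
            · have hzbwG : ({z, b, w} : Finset α) ∈ G := by
                apply memG _ (insert_subset hzY (insert_subset hbY
                  (singleton_subset_iff.mpr hwY))) (mem_insert_self _ _)
                have hsub2 : ({z, b} : Finset α) ⊆ {z, b, w} := by
                  intro a ha
                  rw [mem_insert, mem_singleton] at ha
                  rcases ha with rfl | rfl
                  · exact mem_insert_self _ _
                  · exact mem_insert_of_mem (mem_insert_self _ _)
                calc (2:ℕ) = ({z, b} : Finset α).card := by
                      rw [card_pair (Ne.symm hbz)]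
                _ ≤ _ := card_le_card hsub2
              obtain ⟨a, ha⟩ := hiii _ hzbwG _ step2 _ h ⟨b, by simp⟩
                ⟨w, by simp [mem_sdiff, hwY, hwz, hwb]⟩
              rw [mem_inter, mem_inter, mem_singleton] at ha
              obtain ⟨⟨_, rfl⟩, hmem⟩ := ha
              rw [mem_sdiff] at hmem
              exact hmem.2 (by simp)
          refine ⟨z, hzY, hGz, ?_⟩
          ext B
          rw [mem_insert, mem_filter, mem_powerset]
          constructor
          · intro hB
            by_cases hBe : B = ∅
            · exact Or.inl hBe
            · exact Or.inr ⟨mem_powerset.mp (hHpow hB),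
                hHstar B hB (nonempty_iff_ne_empty.mpr hBe)⟩
          · rintro (rfl | ⟨hBY, hzB⟩)
            · exact hCSH closedSets_empty_mem
            · by_cases hBY2 : B = Y
              · subst hBY2; exact hCSH (Y_mem_closedSets Y G)
              · obtain ⟨v, hv⟩ := sdiff_nonempty.mpr
                  (fun hc => hBY2 (Subset.antisymm hBY hc))
                rw [mem_sdiff] at hv
                have hvz : v ≠ z := fun h => hv.2 (h ▸ hzB)
                have hzvG : ({z, v} : Finset α) ∈ G := memG _
                  (insert_subset hzY (singleton_subset_iff.mpr hv.1)) (mem_insert_self _ _)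
                  (by simp [card_pair (Ne.symm hvz)])
                rcases pairTool B hBY ⟨{z,v}, hzvG,
                    ⟨z, mem_inter.mpr ⟨mem_insert_self _ _, hzB⟩⟩,
                    ⟨v, mem_inter.mpr ⟨mem_insert_of_mem (mem_singleton_self v),
                      mem_sdiff.mpr hv⟩⟩⟩ with h | h
                · exact h
                · exfalso
                  have hcon := hHstar _ h ⟨v, mem_sdiff.mpr hv⟩
                  rw [mem_sdiff] at hcon
                  exact hcon.2 hzB
        · -- Y.card = 2
          have hm2' : Y.card = 2 := by omega
          have h1 : (Y.erase z).card = 1 := by rw [card_erase_of_mem hzY]; omega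
          obtain ⟨b, hb⟩ := card_eq_one.mp h1
          have hbmem : b ∈ Y.erase z := hb ▸ mem_singleton_self b
          have hbY : b ∈ Y := mem_of_mem_erase hbmem
          have hbz : b ≠ z := ne_of_mem_erase hbmem
          have hYzb : Y = {z, b} := by rw [← insert_erase hzY, hb]
          have hGY : G = {Y} := by
            rw [hGz]
            ext A
            rw [mem_star2, mem_singleton]
            constructor
            · rintro ⟨h1', _, h3'⟩
              exact eq_of_subset_of_card_le h1' (by omega)
            · rintro rfl
              exact ⟨Subset.refl Y, hzY, by omega⟩
          have hYG : Y ∈ G := by rw [hGY]; exact mem_singleton_self Y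
          have hYz : Y \ {z} = {b} := by
            rw [hYzb]
            ext a
            rw [mem_sdiff, mem_insert, mem_singleton, mem_singleton]
            constructor
            · rintro ⟨rfl | rfl, h2'⟩
              · exact absurd rfl h2'
              · rfl
            · rintro rfl
              exact ⟨Or.inr rfl, hbz⟩
          have key : ∀ u v : α, u ≠ v → Y = {u, v} → ({u} : Finset α) ∈ H →
              u ∈ Y ∧ G = star2 Y u ∧
                H = insert ∅ (Y.powerset.filter (fun W => u ∈ W)) := by
            intro u v huv hYuv huH
            have huY : u ∈ Y := by rw [hYuv]; exact mem_insert_self u {v}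
            have hvY : v ∈ Y := by rw [hYuv]; exact mem_insert_of_mem (mem_singleton_self v)
            refine ⟨huY, ?_, ?_⟩
            · rw [hGY]
              ext A
              rw [mem_singleton, mem_star2]
              constructor
              · rintro rfl
                exact ⟨Subset.refl Y, huY, by omega⟩
              · rintro ⟨h1', _, h3'⟩
                exact eq_of_subset_of_card_le h1' (by omega)
            · ext B
              rw [mem_insert, mem_filter, mem_powerset]
              constructor
              · intro hB
                have hBY : B ⊆ Y := mem_powerset.mp (hHpow hB)
                by_cases hBe : B = ∅
                · exact Or.inl hBe
                by_cases huB : u ∈ B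
                · exact Or.inr ⟨hBY, huB⟩
                exfalso
                obtain ⟨c, hc⟩ := nonempty_iff_ne_empty.mpr hBe
                have hcv : c = v := by
                  have hcY := hBY hc
                  rw [hYuv, mem_insert, mem_singleton] at hcY
                  rcases hcY with h' | h'
                  · exact absurd (h' ▸ hc) huB
                  · exact h'
                subst hcv
                obtain ⟨a, ha⟩ := hiii Y hYG {u} huH B hB
                  ⟨u, mem_inter.mpr ⟨huY, mem_singleton_self u⟩⟩
                  ⟨c, mem_inter.mpr ⟨hvY, hc⟩⟩
                rw [mem_inter, mem_inter, mem_singleton] at ha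
                obtain ⟨⟨_, rfl⟩, haB⟩ := ha
                exact huB haB
              · rintro (rfl | ⟨hBY, huB⟩)
                · exact hCSH closedSets_empty_mem
                · by_cases hvB : v ∈ B
                  · have hBeq : B = Y := Subset.antisymm hBY
                      (by rw [hYuv]; exact insert_subset huB (singleton_subset_iff.mpr hvB))
                    rw [hBeq]
                    exact hCSH (Y_mem_closedSets Y G)
                  · have hBeq : B = {u} := by
                      apply Subset.antisymm
                      · intro a ha
                        have haY := hBY ha
                        rw [hYuv, mem_insert, mem_singleton] at haY
                        rcases haY with h' | h'
                        · rw [mem_singleton]; exact h'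
                        · exact absurd (h' ▸ ha) hvB
                      · exact singleton_subset_iff.mpr huB
                    rw [hBeq]
                    exact huH
          have hsplit1 : ({z} : Finset α) ∈ H ∨ Y \ {z} ∈ H :=
            pairTool {z} (singleton_subset_iff.mpr hzY)
              ⟨Y, hYG, ⟨z, mem_inter.mpr ⟨hzY, mem_singleton_self z⟩⟩,
                ⟨b, mem_inter.mpr ⟨hbY, by rw [hYz]; exact mem_singleton_self b⟩⟩⟩
          rcases hsplit1 with h | h
          · obtain ⟨h1', h2', h3'⟩ := key z b (Ne.symm hbz) hYzb h
            exact ⟨z, h1', h2', h3'⟩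
          · rw [hYz] at h
            obtain ⟨h1', h2', h3'⟩ := key b z hbz (hYzb.trans (pair_comm z b)) h
            exact ⟨b, h1', h2', h3'⟩
      obtain ⟨u, huY, hGu, hHu⟩ := hanchor
      have hux : u ≠ x := fun h => hxY (h ▸ huY)
      refine ⟨u, hYX huY, ?_⟩
      ext A
      rw [hFmem A, mem_extremal]
      constructor
      · rintro (⟨h1, h2, h3⟩ | ⟨h1, (h2 | h2)⟩)
        · rw [hHu, mem_insert, mem_filter] at h3
          rcases h3 with h3 | ⟨_, h3⟩
          · right
            have h4 := insert_erase h1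
            rw [h3] at h4
            have hAx : A = {x} := by rw [← h4]; rfl
            rw [hAx] at h2 ⊢
            refine ⟨h2, by simp, ?_⟩
            rw [mem_singleton]
            exact hux
          · exact Or.inl ⟨h2, mem_of_mem_erase h3⟩
        · rw [hGu, mem_star2] at h2
          exact Or.inl ⟨h2.1.trans hYX, h2.2.1⟩
        · rw [hSmeq, mem_smalls] at h2
          by_cases huA : u ∈ A
          · exact Or.inl ⟨h2.1.trans hYX, huA⟩
          · exact Or.inr ⟨h2.1.trans hYX, h2.2, huA⟩
      · rintro (⟨h1, h2⟩ | ⟨h1, h2, h3⟩)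
        · by_cases hxA : x ∈ A
          · left
            refine ⟨hxA, h1, ?_⟩
            rw [hHu, mem_insert, mem_filter, mem_powerset]
            exact Or.inr ⟨erase_subset_erase x h1, mem_erase.mpr ⟨hux, h2⟩⟩
          · right
            refine ⟨hxA, ?_⟩
            have hAY : A ⊆ Y := subset_erase.mpr ⟨h1, hxA⟩
            by_cases hc : A.card ≤ 1
            · right; rw [hSmeq, mem_smalls]; exact ⟨hAY, hc⟩
            · left; rw [hGu, mem_star2]; exact ⟨hAY, h2, by omega⟩
        · by_cases hxA : x ∈ A
          · left
            have hA1 : A = {x} := by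
              have hle : 1 ≤ A.card := card_pos.mpr ⟨x, hxA⟩
              obtain ⟨y, hy⟩ := card_eq_one.mp (le_antisymm h2 hle)
              have hxy : x = y := by
                rw [hy, mem_singleton] at hxA
                exact hxA
              rw [hy, ← hxy]
            refine ⟨hxA, h1, ?_⟩
            rw [hHu, mem_insert]
            left
            rw [hA1]
            simp
          · right
            refine ⟨hxA, Or.inr ?_⟩
            rw [hSmeq, mem_smalls]
            exact ⟨subset_erase.mpr ⟨h1, hxA⟩, h2⟩

end RproofSec

theorem master {α : Type*} [DecidableEq α] : ∀ n : ℕ, Rstmt α n ∧ Cstmt α n := by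
  intro n
  induction n using Nat.strong_induction_on with
  | _ n IH =>
    have hR : Rstmt α n := Rproof n (fun k hk => (IH k hk).2)
    refine ⟨hR, Cproof n (fun k hk => (IH k hk).2) (fun k hk => ?_)⟩
    rcases lt_or_eq_of_le hk with h | h
    · exact (IH k h).1
    · exact h ▸ hR

theorem stmt5 {α : Type*} [DecidableEq α] (n : ℕ) (hn : 1 ≤ n) (X : Finset α)
    (hX : X.card = n) (F : Finset (Finset α)) (hF : F ⊆ X.powerset)
    (hfree : SimplexFree 2 F) :
    F.card ≤ 2 ^ (n - 1) + n ∧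
    (F.card = 2 ^ (n - 1) + n ↔ ∃ x ∈ X,
      F = X.powerset.filter (fun A => x ∈ A) ∪
        X.powerset.filter (fun A => A.card ≤ 1 ∧ x ∉ A)) := by
  obtain ⟨hb, he⟩ := (master (α := α) n).1 X F hX hn hF hfree
  refine ⟨hb, ?_, ?_⟩
  · intro h
    obtain ⟨x, hxX, hFx⟩ := he h
    exact ⟨x, hxX, hFx⟩
  · rintro ⟨x, hxX, rfl⟩
    have hc := card_extremal (X := X) (x := x) hxX
    rw [hX] at hc
    exact hc
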